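/- Let κ : [0,T] → ℝ with κ(t) > 0, σ : [0,T] → ℝ continuous, ρ : [0,T] → [-1,1], and ξ > 0. Suppose α_R, α_I : [0,T] → ℝ are C¹ with α_R satisfying α_R'(t) = (1/2)D(t) + κ(t)α_R(t) − (1/2)σ(t)²α_R(t)², α_R(T) = 0, where D(t) = ξ² + 2ρ(t)σ(t)ξ α_I(t) + σ(t)² α_I(t)². Then D(t) ≥ 0 for all t, and α_R(t) ≤ 0 for all t ∈ [0,T]. -/
import Mathlib


/-- For the real part `α_R` of the solution of the complex Heston Riccati equation with
`√p = −iξ`: `α_R' = (1/2)D + κ α_R − (1/2)σ²α_R²`, `α_R(T) = 0`, where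
`D = ξ² + 2ρσξα_I + σ²α_I²`.  Then `D(t) ≥ 0` on `[0,T]` and `α_R(t) ≤ 0` on `[0,T]`. -/
theorem stmt_9 (T : ℝ) (hT : 0 < T) (κ σ ρ αR αI : ℝ → ℝ) (ξ : ℝ) (hξ : 0 < ξ)
    (hκ : ∀ t ∈ Set.Icc (0 : ℝ) T, 0 < κ t)
    (hσ : ContinuousOn σ (Set.Icc (0 : ℝ) T))
    (hρ : ∀ t ∈ Set.Icc (0 : ℝ) T, ρ t ∈ Set.Icc (-1 : ℝ) 1)
    (hαI : ContinuousOn αI (Set.Icc (0 : ℝ) T))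
    (D : ℝ → ℝ)
    (hD : ∀ t, D t = ξ ^ 2 + 2 * ρ t * σ t * ξ * αI t + (σ t) ^ 2 * (αI t) ^ 2)
    (hαR : ∀ t ∈ Set.Icc (0 : ℝ) T,
      HasDerivAt αR ((1 / 2) * D t + κ t * αR t - (1 / 2) * (σ t) ^ 2 * (αR t) ^ 2) t)
    (hC1 : ContinuousOn (deriv αR) (Set.Icc (0 : ℝ) T))
    (hαRT : αR T = 0) :
    (∀ t ∈ Set.Icc (0 : ℝ) T, 0 ≤ D t) ∧ ∀ t ∈ Set.Icc (0 : ℝ) T, αR t ≤ 0 := by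
  have hDpos : ∀ t ∈ Set.Icc (0 : ℝ) T, 0 ≤ D t := by
    intro t ht
    obtain ⟨h1, h2⟩ := hρ t ht
    rw [hD]
    nlinarith [sq_nonneg (ξ + ρ t * σ t * αI t), sq_nonneg (σ t * αI t),
      mul_nonneg (mul_nonneg (by linarith : (0:ℝ) ≤ 1 - ρ t) (by linarith : (0:ℝ) ≤ 1 + ρ t))
        (sq_nonneg (σ t * αI t))]
  refine ⟨hDpos, ?_⟩
  -- continuity of αR on [0,T]
  have hcont : ContinuousOn αR (Set.Icc (0 : ℝ) T) := fun t ht =>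
    ((hαR t ht).continuousAt).continuousWithinAt
  by_contra hcon
  push_neg at hcon
  obtain ⟨t0, ht0, ht0pos⟩ := hcon
  have ht0pos : 0 < αR t0 := by linarith
  have ht0T : t0 ≤ T := ht0.2
  -- bounds
  obtain ⟨tM, _, hM⟩ := isCompact_Icc.exists_isMaxOn ⟨t0, ht0⟩ hcont
  set M := αR tM with hMdef
  have hMpos : 0 < M := lt_of_lt_of_le ht0pos (hM ht0)
  have hσ2 : ContinuousOn (fun t => (σ t) ^ 2) (Set.Icc (0 : ℝ) T) := hσ.pow 2
  obtain ⟨tS, htS, hS⟩ := isCompact_Icc.exists_isMaxOn ⟨t0, ht0⟩ hσ2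
  set S := (σ tS) ^ 2 with hSdef
  have hSnn : 0 ≤ S := sq_nonneg _
  set C := S * M / 2 with hCdef
  have hCnn : 0 ≤ C := by positivity
  -- the set where αR ≤ 0 on [t0, T]
  set E := {t ∈ Set.Icc t0 T | αR t ≤ 0} with hEdef
  have hsubIcc : Set.Icc t0 T ⊆ Set.Icc (0 : ℝ) T := Set.Icc_subset_Icc_left ht0.1
  have hEclosed : IsClosed E := by
    have : E = Set.Icc t0 T ∩ αR ⁻¹' Set.Iic 0 := by
      ext x; simp [hEdef, Set.mem_Icc, and_comm]
    rw [this]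
    exact (hcont.mono hsubIcc).preimage_isClosed_of_isClosed isClosed_Icc isClosed_Iic
  have hEcompact : IsCompact E := isCompact_Icc.of_isClosed_subset hEclosed (fun x hx => hx.1)
  have hEne : E.Nonempty := ⟨T, ⟨Set.mem_Icc.2 ⟨ht0T, le_rfl⟩, le_of_eq hαRT⟩⟩
  set s := sInf E with hsdef
  have hsE : s ∈ E := hEcompact.sInf_mem hEne
  have hst0 : t0 ≤ s := hsE.1.1
  have hsT : s ≤ T := hsE.1.2
  have hsneg : αR s ≤ 0 := hsE.2
  have hst0' : t0 < s := lt_of_le_of_ne hst0 (by intro h; rw [h] at ht0pos; linarith)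
  -- αR > 0 on [t0, s)
  have hposIco : ∀ t ∈ Set.Ico t0 s, 0 < αR t := by
    intro t ht
    by_contra h
    push_neg at h
    have : t ∈ E := ⟨Set.mem_Icc.2 ⟨ht.1, le_trans (le_of_lt ht.2) hsT⟩, h⟩
    exact absurd (csInf_le hEcompact.bddBelow this) (not_le.2 ht.2)
  -- monotonicity of g t = αR t * exp (C t) on [t0, s]
  have hsubIcc' : Set.Icc t0 s ⊆ Set.Icc (0 : ℝ) T :=
    Set.Icc_subset_Icc ht0.1 hsT
  have hmono : MonotoneOn (fun t => αR t * Real.exp (C * t)) (Set.Icc t0 s) := by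
    apply monotoneOn_of_hasDerivWithinAt_nonneg (convex_Icc t0 s)
      (f' := fun t => ((1 / 2) * D t + κ t * αR t - (1 / 2) * (σ t) ^ 2 * (αR t) ^ 2)
        * Real.exp (C * t) + αR t * (C * Real.exp (C * t)))
    · exact (hcont.mono hsubIcc').mul (Real.continuous_exp.comp (continuous_const.mul continuous_id)).continuousOn
    · intro x hx
      rw [interior_Icc] at hx
      have hxT : x ∈ Set.Icc (0 : ℝ) T := hsubIcc' ⟨le_of_lt hx.1, le_of_lt hx.2⟩
      have hexp : HasDerivAt (fun t => Real.exp (C * t)) (Real.exp (C * x) * C) x :=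
        by simpa using ((hasDerivAt_id x).const_mul C).exp
      exact (((hαR x hxT).mul hexp).congr_deriv (by ring_nf)).hasDerivWithinAt
    · intro x hx
      rw [interior_Icc] at hx
      have hxT : x ∈ Set.Icc (0 : ℝ) T := hsubIcc' ⟨le_of_lt hx.1, le_of_lt hx.2⟩
      have hxpos : 0 < αR x := hposIco x ⟨le_of_lt hx.1, hx.2⟩
      have hDx : 0 ≤ D x := hDpos x hxT
      have hκx : 0 < κ x := hκ x hxT
      have hMx : αR x ≤ M := hM hxT
      have hSx : (σ x) ^ 2 ≤ S := hS hxT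
      have hexp : 0 < Real.exp (C * x) := Real.exp_pos _
      have key : 0 ≤ (1 / 2) * D x + κ x * αR x - (1 / 2) * (σ x) ^ 2 * (αR x) ^ 2
          + αR x * C := by
        have h1 : (σ x) ^ 2 * αR x ≤ S * M :=
          mul_le_mul hSx hMx (le_of_lt hxpos) hSnn
        have h2 : 0 ≤ κ x * αR x := mul_nonneg (le_of_lt hκx) (le_of_lt hxpos)
        rw [hCdef]
        nlinarith [mul_nonneg (le_of_lt hxpos) (sub_nonneg.2 h1)]
      nlinarith [mul_nonneg key (le_of_lt hexp)]
  have h1 := hmono (Set.left_mem_Icc.2 (le_of_lt hst0')) (Set.right_mem_Icc.2 (le_of_lt hst0')) (le_of_lt hst0')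
  simp only at h1
  have hgpos : 0 < αR t0 * Real.exp (C * t0) := by positivity
  have : 0 < αR s * Real.exp (C * s) := lt_of_lt_of_le hgpos h1
  nlinarith [Real.exp_pos (C * s)]
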